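/- For κ = 1/√2, if (f,q) solve the first-order system f' = −fq/√2 and q' = (1−f²)/√2 on an interval, then they solve the second-order Ginzburg-Landau equations 2f'' = f(f²+q²−1) and q'' = qf². -/

import Mathlib

theorem stmt_7 (b c : ℝ) (f q : ℝ → ℝ)
    (hf : ∀ x ∈ Set.Ioo b c, HasDerivAt f (-(f x * q x) / Real.sqrt 2) x)
    (hq : ∀ x ∈ Set.Ioo b c, HasDerivAt q ((1 - (f x) ^ 2) / Real.sqrt 2) x) :
    ∀ x ∈ Set.Ioo b c,
      2 * deriv (deriv f) x = f x * ((f x) ^ 2 + (q x) ^ 2 - 1) ∧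
      deriv (deriv q) x = q x * (f x) ^ 2 := by
  intro x hx
  have hs2 : Real.sqrt 2 ≠ 0 := by positivity
  have hs2sq : Real.sqrt 2 * Real.sqrt 2 = 2 := Real.mul_self_sqrt (by norm_num)
  have hmem : Set.Ioo b c ∈ nhds x := (isOpen_Ioo).mem_nhds hx
  have hef : deriv f =ᶠ[nhds x] fun y => -(f y * q y) / Real.sqrt 2 := by
    filter_upwards [hmem] with y hy using (hf y hy).deriv
  have heq : deriv q =ᶠ[nhds x] fun y => (1 - (f y) ^ 2) / Real.sqrt 2 := by
    filter_upwards [hmem] with y hy using (hq y hy).deriv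
  have hfx := hf x hx
  have hqx := hq x hx
  have hg : HasDerivAt (fun y => -(f y * q y) / Real.sqrt 2)
      ((-((-(f x * q x) / Real.sqrt 2) * q x + f x * ((1 - (f x) ^ 2) / Real.sqrt 2))) / Real.sqrt 2) x := by
    exact ((hfx.mul hqx).neg).div_const _
  have hh : HasDerivAt (fun y => (1 - (f y) ^ 2) / Real.sqrt 2)
      ((0 - 2 * f x ^ 1 * (-(f x * q x) / Real.sqrt 2)) / Real.sqrt 2) x := by
    exact (((hasDerivAt_const x (1:ℝ)).sub (hfx.pow 2)).div_const _)
  have h1 : deriv (deriv f) x = (-((-(f x * q x) / Real.sqrt 2) * q x + f x * ((1 - (f x) ^ 2) / Real.sqrt 2))) / Real.sqrt 2 := by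
    rw [Filter.EventuallyEq.deriv_eq hef]
    exact hg.deriv
  have h2 : deriv (deriv q) x = (0 - 2 * f x ^ 1 * (-(f x * q x) / Real.sqrt 2)) / Real.sqrt 2 := by
    rw [Filter.EventuallyEq.deriv_eq heq]
    exact hh.deriv
  constructor
  · rw [h1]; field_simp; ring_nf; rw [Real.sq_sqrt (by norm_num : (0:ℝ) ≤ 2)]; ring
  · rw [h2]; field_simp; ring_nf; rw [Real.sq_sqrt (by norm_num : (0:ℝ) ≤ 2)]; ring
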